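/- Let γ > 1 and v* > 0. There exist constants C > 0 and δ* > 0 such that for any δ ∈ (0, δ*) and any v, w > 0 satisfying |p(v) − p(w)| < δ and |p(w) − p(v*)| < δ, one has both Q(v|w) ≥ (p(w)^(−1/γ−1)/(2γ)) (p(v) − p(w))² − ((1+γ)/(3γ²)) p(w)^(−1/γ−2) (p(v) − p(w))³ and Q(v|w) ≤ ( p(w)^(−1/γ−1)/(2γ) + C δ ) (p(v) − p(w))². -/

import Mathlib

open MeasureTheory Real Set

/-- Pressure `p(v) = v^(-γ)`. -/
noncomputable def pres (γ v : ℝ) : ℝ := v ^ (-γ)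

/-- Internal energy `Q(v) = v^(1-γ)/(γ-1)`. -/
noncomputable def Qint (γ v : ℝ) : ℝ := v ^ (1 - γ) / (γ - 1)

/-- Relative internal energy `Q(v|w) = Q(v) - Q(w) - Q'(w)(v-w)`, with `Q'(w) = -p(w)`. -/
noncomputable def Qrel (γ v w : ℝ) : ℝ := Qint γ v - Qint γ w + pres γ w * (v - w)

/-! ### Auxiliary lemmas -/

lemma hasDerivAt_rpow_two (A B e1 e2 : ℝ) {x : ℝ} (hx : 0 < x) :
    HasDerivAt (fun y : ℝ => A * y ^ e1 + B * y ^ e2)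
      (A * e1 * x ^ (e1 - 1) + B * e2 * x ^ (e2 - 1)) x := by
  have h1 := (Real.hasDerivAt_rpow_const (p := e1) (Or.inl hx.ne')).const_mul A
  have h2 := (Real.hasDerivAt_rpow_const (p := e2) (Or.inl hx.ne')).const_mul B
  refine (h1.add h2).congr_deriv ?_
  ring

lemma monoOn_of_hasDerivAt {l r : ℝ} {f f' : ℝ → ℝ}
    (hf : ∀ x ∈ Set.Ioo l r, HasDerivAt f (f' x) x)
    (h0 : ∀ x ∈ Set.Ioo l r, 0 ≤ f' x) : MonotoneOn f (Set.Ioo l r) := by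
  apply monotoneOn_of_deriv_nonneg (convex_Ioo l r)
  · exact fun x hx => (hf x hx).continuousAt.continuousWithinAt
  · intro x hx
    rw [interior_Ioo] at hx
    exact (hf x hx).differentiableAt.differentiableWithinAt
  · intro x hx
    rw [interior_Ioo] at hx
    rw [(hf x hx).deriv]
    exact h0 x hx

lemma nonneg_of_deriv_zero_mono {l r q : ℝ} {f f' : ℝ → ℝ} (hq : q ∈ Set.Ioo l r)
    (hf : ∀ x ∈ Set.Ioo l r, HasDerivAt f (f' x) x)
    (hfq : f q = 0) (hf'q : f' q = 0)
    (hmono : MonotoneOn f' (Set.Ioo l r)) :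
    ∀ x ∈ Set.Ioo l r, 0 ≤ f x := by
  intro x hx
  rcases lt_trichotomy x q with h | h | h
  · have hsub : Set.Icc x q ⊆ Set.Ioo l r := fun y hy =>
      ⟨lt_of_lt_of_le hx.1 hy.1, lt_of_le_of_lt hy.2 hq.2⟩
    obtain ⟨c, hc, hceq⟩ := exists_hasDerivAt_eq_slope f f' h
      (fun y hy => (hf y (hsub hy)).continuousAt.continuousWithinAt)
      (fun y hy => hf y (hsub (Set.Ioo_subset_Icc_self hy)))
    have hcI : c ∈ Set.Ioo l r := hsub (Set.Ioo_subset_Icc_self hc)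
    have : f' c ≤ 0 := hf'q ▸ hmono hcI hq hc.2.le
    rw [hceq, hfq] at this
    rcases div_nonpos_iff.mp this with ⟨h1,h2⟩|⟨h1,h2⟩ <;> linarith
  · rw [h, hfq]
  · have hsub : Set.Icc q x ⊆ Set.Ioo l r := fun y hy =>
      ⟨lt_of_lt_of_le hq.1 hy.1, lt_of_le_of_lt hy.2 hx.2⟩
    obtain ⟨c, hc, hceq⟩ := exists_hasDerivAt_eq_slope f f' h
      (fun y hy => (hf y (hsub hy)).continuousAt.continuousWithinAt)
      (fun y hy => hf y (hsub (Set.Ioo_subset_Icc_self hy)))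
    have hcI : c ∈ Set.Ioo l r := hsub (Set.Ioo_subset_Icc_self hc)
    have : 0 ≤ f' c := hf'q ▸ hmono hq hcI hc.1.le
    rw [hceq, hfq] at this
    rcases div_nonneg_iff.mp this with ⟨h1,h2⟩|⟨h1,h2⟩ <;> linarith

noncomputable def gG (γ q x : ℝ) : ℝ := (1/(γ-1)) * x ^ (1 - 1/γ) + q * x ^ (-(1/γ))
noncomputable def gG1 (γ q x : ℝ) : ℝ := (1/γ) * x ^ (-(1/γ)) + (-(q/γ)) * x ^ (-(1/γ)-1)
noncomputable def gG2 (γ q x : ℝ) : ℝ :=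
  (-((1/γ)^2)) * x ^ (-(1/γ)-1) + ((1/γ)*((1/γ)+1)*q) * x ^ (-(1/γ)-2)
noncomputable def gG3 (γ q x : ℝ) : ℝ :=
  ((1/γ)^2*((1/γ)+1)) * x ^ (-(1/γ)-2) + (-((1/γ)*((1/γ)+1)*((1/γ)+2)*q)) * x ^ (-(1/γ)-3)
noncomputable def gG4 (γ q x : ℝ) : ℝ :=
  (-((1/γ)^2*((1/γ)+1)*((1/γ)+2))) * x ^ (-(1/γ)-3)
    + ((1/γ)*((1/γ)+1)*((1/γ)+2)*((1/γ)+3)*q) * x ^ (-(1/γ)-4)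

lemma gG_deriv {γ q x : ℝ} (hγ : 1 < γ) (hx : 0 < x) :
    HasDerivAt (gG γ q) (gG1 γ q x) x := by
  have h := hasDerivAt_rpow_two (1/(γ-1)) q (1 - 1/γ) (-(1/γ)) hx
  have he : gG1 γ q x = (1/(γ-1)) * (1 - 1/γ) * x ^ ((1 - 1/γ) - 1)
      + q * (-(1/γ)) * x ^ ((-(1/γ)) - 1) := by
    rw [show (1 - 1/γ) - 1 = -(1/γ) by ring]
    unfold gG1
    have h1 : γ - 1 ≠ 0 := by intro h; linarith
    have h2 : γ ≠ 0 := by intro h; linarith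
    field_simp
  rw [he]; exact h

lemma gG1_deriv {γ q x : ℝ} (hx : 0 < x) :
    HasDerivAt (gG1 γ q) (gG2 γ q x) x := by
  have h := hasDerivAt_rpow_two (1/γ) (-(q/γ)) (-(1/γ)) (-(1/γ)-1) hx
  have he : gG2 γ q x = (1/γ) * (-(1/γ)) * x ^ ((-(1/γ)) - 1)
      + (-(q/γ)) * (-(1/γ)-1) * x ^ ((-(1/γ)-1) - 1) := by
    rw [show (-(1/γ)-1) - 1 = -(1/γ)-2 by ring]
    unfold gG2; ring
  rw [he]; exact h

lemma gG2_deriv {γ q x : ℝ} (hx : 0 < x) :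
    HasDerivAt (gG2 γ q) (gG3 γ q x) x := by
  have h := hasDerivAt_rpow_two (-((1/γ)^2)) ((1/γ)*((1/γ)+1)*q) (-(1/γ)-1) (-(1/γ)-2) hx
  have he : gG3 γ q x = (-((1/γ)^2)) * (-(1/γ)-1) * x ^ ((-(1/γ)-1) - 1)
      + ((1/γ)*((1/γ)+1)*q) * (-(1/γ)-2) * x ^ ((-(1/γ)-2) - 1) := by
    rw [show (-(1/γ)-1) - 1 = -(1/γ)-2 by ring, show (-(1/γ)-2) - 1 = -(1/γ)-3 by ring]
    unfold gG3; ring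
  rw [he]; exact h

lemma gG3_deriv {γ q x : ℝ} (hx : 0 < x) :
    HasDerivAt (gG3 γ q) (gG4 γ q x) x := by
  have h := hasDerivAt_rpow_two ((1/γ)^2*((1/γ)+1)) (-((1/γ)*((1/γ)+1)*((1/γ)+2)*q))
    (-(1/γ)-2) (-(1/γ)-3) hx
  have he : gG4 γ q x = ((1/γ)^2*((1/γ)+1)) * (-(1/γ)-2) * x ^ ((-(1/γ)-2) - 1)
      + (-((1/γ)*((1/γ)+1)*((1/γ)+2)*q)) * (-(1/γ)-3) * x ^ ((-(1/γ)-3) - 1) := by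
    rw [show (-(1/γ)-2) - 1 = -(1/γ)-3 by ring, show (-(1/γ)-3) - 1 = -(1/γ)-4 by ring]
    unfold gG4; ring
  rw [he]; exact h

lemma gG1_self {γ q : ℝ} (hq : 0 < q) : gG1 γ q q = 0 := by
  unfold gG1
  rw [show -(1/γ) = (-(1/γ)-1) + 1 by ring, Real.rpow_add_one hq.ne']
  ring

lemma gG2_self {γ q : ℝ} (hq : 0 < q) : gG2 γ q q = (1/γ) * q ^ (-(1/γ)-1) := by
  unfold gG2
  rw [show -(1/γ)-1 = (-(1/γ)-2) + 1 by ring, Real.rpow_add_one hq.ne']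
  ring

lemma gG3_self {γ q : ℝ} (hq : 0 < q) :
    gG3 γ q q = -(2*(1/γ)*((1/γ)+1)) * q ^ (-(1/γ)-2) := by
  unfold gG3
  rw [show -(1/γ)-2 = (-(1/γ)-3) + 1 by ring, Real.rpow_add_one hq.ne']
  ring

lemma gG4_nonneg {γ q x : ℝ} (hγ : 1 < γ) (hq : 0 < q) (hx : 0 < x) (h : x ≤ 2*q) :
    0 ≤ gG4 γ q x := by
  have hc0 : 0 < 1/γ := by positivity
  have hc1 : 1/γ < 1 := by rw [div_lt_one (by linarith)]; linarith
  have hX : 0 < x ^ (-(1/γ)-4) := Real.rpow_pos_of_pos hx _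
  unfold gG4
  rw [show -(1/γ)-3 = (-(1/γ)-4) + 1 by ring, Real.rpow_add_one hx.ne']
  have key : 0 ≤ ((1/γ)+3)*q - (1/γ)*x := by nlinarith
  have hco : (0:ℝ) ≤ (1/γ)*((1/γ)+1)*((1/γ)+2) := by positivity
  nlinarith [mul_nonneg (mul_nonneg hco hX.le) key]

lemma gG3_abs_le {γ q x l : ℝ} (hγ : 1 < γ) (hl : 0 < l) (hq : 0 < q) (hlx : l ≤ x) :
    |gG3 γ q x| ≤ 2 * l ^ (-(1/γ)-2) + 6 * q * l ^ (-(1/γ)-3) := by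
  have hc0 : 0 < 1/γ := by positivity
  have hc1 : 1/γ < 1 := by rw [div_lt_one (by linarith)]; linarith
  have hx : 0 < x := lt_of_lt_of_le hl hlx
  have e2 : x ^ (-(1/γ)-2) ≤ l ^ (-(1/γ)-2) :=
    Real.rpow_le_rpow_of_nonpos hl hlx (by linarith)
  have e3 : x ^ (-(1/γ)-3) ≤ l ^ (-(1/γ)-3) :=
    Real.rpow_le_rpow_of_nonpos hl hlx (by linarith)
  have p2 : 0 < x ^ (-(1/γ)-2) := Real.rpow_pos_of_pos hx _
  have p3 : 0 < x ^ (-(1/γ)-3) := Real.rpow_pos_of_pos hx _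
  have hA : (1/γ)^2*((1/γ)+1) * x ^ (-(1/γ)-2) ≤ 2 * l ^ (-(1/γ)-2) := by
    have hcb : (1/γ)^2*((1/γ)+1) ≤ 2 := by nlinarith
    exact mul_le_mul hcb e2 p2.le (by norm_num)
  have hB : (1/γ)*((1/γ)+1)*((1/γ)+2)*q * x ^ (-(1/γ)-3) ≤ 6 * q * l ^ (-(1/γ)-3) := by
    have h6 : (1/γ)*((1/γ)+1)*((1/γ)+2) ≤ 6 := by nlinarith
    have hcb : (1/γ)*((1/γ)+1)*((1/γ)+2)*q ≤ 6*q := by nlinarith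
    exact mul_le_mul hcb e3 p3.le (by positivity)
  have hApos : (0:ℝ) ≤ (1/γ)^2*((1/γ)+1) * x ^ (-(1/γ)-2) := by positivity
  have hBpos : (0:ℝ) ≤ (1/γ)*((1/γ)+1)*((1/γ)+2)*q * x ^ (-(1/γ)-3) := by positivity
  unfold gG3
  rw [abs_le]
  constructor <;> nlinarith

lemma Qrel_eq {γ v w : ℝ} (hγ : 1 < γ) (hv : 0 < v) (hw : 0 < w) :
    Qrel γ v w = gG γ (pres γ w) (pres γ v) - gG γ (pres γ w) (pres γ w) := by
  have hγ0 : γ ≠ 0 := by intro h; linarith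
  have h1 : (v ^ (-γ)) ^ (1 - 1/γ) = v ^ (1-γ) := by
    rw [← Real.rpow_mul hv.le, show -γ * (1 - 1/γ) = 1 - γ by field_simp; ring]
  have h2 : (v ^ (-γ)) ^ (-(1/γ)) = v := by
    rw [← Real.rpow_mul hv.le, show -γ * -(1/γ) = 1 by field_simp, Real.rpow_one]
  have h3 : (w ^ (-γ)) ^ (1 - 1/γ) = w ^ (1-γ) := by
    rw [← Real.rpow_mul hw.le, show -γ * (1 - 1/γ) = 1 - γ by field_simp; ring]
  have h4 : (w ^ (-γ)) ^ (-(1/γ)) = w := by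
    rw [← Real.rpow_mul hw.le, show -γ * -(1/γ) = 1 by field_simp, Real.rpow_one]
  unfold Qrel Qint pres gG
  rw [h1, h2, h3, h4]
  ring

set_option maxHeartbeats 1000000 in
/-- Lemma A.3 (estimates (A.6) and (A.7)): two-sided local bounds for the relative
internal energy in terms of the pressure difference. -/
theorem relative_entropy_local_bounds (γ vstar : ℝ) (hγ : 1 < γ) (hvstar : 0 < vstar) :
    ∃ C δstar : ℝ, 0 < C ∧ 0 < δstar ∧
      ∀ δ : ℝ, 0 < δ → δ < δstar →
      ∀ v w : ℝ, 0 < v → 0 < w →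
        |pres γ v - pres γ w| < δ → |pres γ w - pres γ vstar| < δ →
        ((pres γ w) ^ (-1/γ - 1) / (2 * γ) * (pres γ v - pres γ w) ^ 2
            - (1 + γ) / (3 * γ ^ 2) * (pres γ w) ^ (-1/γ - 2) * (pres γ v - pres γ w) ^ 3
          ≤ Qrel γ v w) ∧
        Qrel γ v w ≤ ((pres γ w) ^ (-1/γ - 1) / (2 * γ) + C * δ) *
          (pres γ v - pres γ w) ^ 2 := by
  have hγ0 : (0:ℝ) < γ := by linarith
  have hc0 : 0 < 1/γ := by positivity
  have hc1 : 1/γ < 1 := by rw [div_lt_one hγ0]; linarith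
  set pstar := pres γ vstar with hpstar
  have hps0 : 0 < pstar := Real.rpow_pos_of_pos hvstar _
  set l := 3/4 * pstar with hldef
  set r := 5/4 * pstar with hrdef
  have hl0 : 0 < l := by rw [hldef]; positivity
  set L := 2 * l ^ (-(1/γ)-2) + 12 * pstar * l ^ (-(1/γ)-3) with hLdef
  have hL0 : 0 < L := by
    rw [hLdef]
    have := Real.rpow_pos_of_pos hl0 (-(1/γ)-2)
    have := Real.rpow_pos_of_pos hl0 (-(1/γ)-3)
    positivity
  refine ⟨L/2 + 1, pstar/8, by positivity, by positivity, ?_⟩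
  intro δ hδ0 hδs v w hv hw hpvw hpws
  set p := pres γ v with hpdef
  set q := pres γ w with hqdef
  have hp0 : 0 < p := Real.rpow_pos_of_pos hv _
  have hq0 : 0 < q := Real.rpow_pos_of_pos hw _
  rw [abs_lt] at hpvw hpws
  have hqI : q ∈ Set.Ioo l r := by
    constructor
    · rw [hldef]; linarith [hpws.1]
    · rw [hrdef]; linarith [hpws.2]
  have hpI : p ∈ Set.Ioo l r := by
    constructor
    · rw [hldef]; linarith [hpvw.1, hpws.1]
    · rw [hrdef]; linarith [hpvw.2, hpws.2]
  have hxpos : ∀ x ∈ Set.Ioo l r, 0 < x := fun x hx => lt_trans hl0 hx.1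
  have hx2q : ∀ x ∈ Set.Ioo l r, x ≤ 2*q := by
    intro x hx
    have h2 := hx.2
    rw [hrdef] at h2
    have h1 := hpws.1
    linarith
  have key : Qrel γ v w = gG γ q p - gG γ q q := by
    have h := Qrel_eq hγ hv hw
    rw [← hpdef, ← hqdef] at h
    exact h
  set a2 := gG2 γ q q with ha2
  set a3 := gG3 γ q q with ha3
  -- Step A: second-order Taylor remainder of gG2 is nonnegative on (l,r)
  have hA : ∀ x ∈ Set.Ioo l r, 0 ≤ gG2 γ q x - (a2 + a3*(x-q)) := by
    apply nonneg_of_deriv_zero_mono hqI (f' := fun x => gG3 γ q x - a3)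
    · intro x hx
      have h1 := gG2_deriv (q := q) (γ := γ) (hxpos x hx)
      have h2 : HasDerivAt (fun y:ℝ => a2 + a3*(y-q)) a3 x := by
        simpa using (((hasDerivAt_id x).sub_const q).const_mul a3).const_add a2
      exact h1.sub h2
    · simp [ha2]
    · simp [ha3]
    · apply monoOn_of_hasDerivAt (f' := fun x => gG4 γ q x)
      · intro x hx; exact (gG3_deriv (hxpos x hx)).sub_const a3
      · intro x hx; exact gG4_nonneg hγ hq0 (hxpos x hx) (hx2q x hx)
  -- Step B: third-order Taylor lower bound for gG on (l,r)
  have hB : ∀ x ∈ Set.Ioo l r,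
      0 ≤ gG γ q x - (gG γ q q + (a2/2*(x-q)^2 + a3/6*(x-q)^3)) := by
    apply nonneg_of_deriv_zero_mono hqI
      (f' := fun x => gG1 γ q x - (a2*(x-q) + a3/2*(x-q)^2))
    · intro x hx
      have h1 := gG_deriv (q := q) hγ (hxpos x hx)
      have h2 : HasDerivAt (fun y:ℝ => gG γ q q + (a2/2*(y-q)^2 + a3/6*(y-q)^3))
          (a2*(x-q) + a3/2*(x-q)^2) x := by
        have hid : HasDerivAt (fun y:ℝ => y - q) 1 x := (hasDerivAt_id x).sub_const q
        have h4 := (((hid.pow 2).const_mul (a2/2)).add ((hid.pow 3).const_mul (a3/6))).const_add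
          (gG γ q q)
        refine h4.congr_deriv ?_
        push_cast
        ring
      exact h1.sub h2
    · simp
    · simp [gG1_self hq0]
    · apply monoOn_of_hasDerivAt (f' := fun x => gG2 γ q x - (a2 + a3*(x-q)))
      · intro x hx
        have h1 := gG1_deriv (q := q) (γ := γ) (hxpos x hx)
        have h2 : HasDerivAt (fun y:ℝ => a2*(y-q) + a3/2*(y-q)^2) (a2 + a3*(x-q)) x := by
          have hid : HasDerivAt (fun y:ℝ => y - q) 1 x := (hasDerivAt_id x).sub_const q
          have h4 := (hid.const_mul a2).add ((hid.pow 2).const_mul (a3/2))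
          refine h4.congr_deriv ?_
          push_cast
          ring
        exact h1.sub h2
      · exact hA
  have hexp1 : (-1/γ - 1 : ℝ) = -(1/γ)-1 := by ring
  have hexp2 : (-1/γ - 2 : ℝ) = -(1/γ)-2 := by ring
  have e1 : q ^ (-(1/γ)-1) / (2*γ) = a2/2 := by
    rw [ha2, gG2_self hq0, one_div_mul_eq_div, div_div, mul_comm γ 2]
  have e2 : (1+γ)/(3*γ^2) * q ^ (-(1/γ)-2) = -(a3/6) := by
    rw [ha3, gG3_self hq0]
    have hcc : (1+γ)/(3*γ^2) = -(-(2*(1/γ)*((1/γ)+1))/6) := by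
      field_simp
      try ring
    rw [hcc]
    ring
  constructor
  · -- lower bound
    have hlow := hB p hpI
    rw [hexp1, hexp2, e1, e2, key]
    linarith
  · -- upper bound
    have hJsub : Set.Ioo (q-δ) (q+δ) ⊆ Set.Ioo l r := by
      intro x hx
      constructor
      · rw [hldef]; linarith [hx.1, hpws.1]
      · rw [hrdef]; linarith [hx.2, hpws.2]
    have hqJ : q ∈ Set.Ioo (q-δ) (q+δ) := ⟨by linarith, by linarith⟩
    have hpJ : p ∈ Set.Ioo (q-δ) (q+δ) := ⟨by linarith [hpvw.1], by linarith [hpvw.2]⟩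
    -- Lipschitz-type bound for gG2 near q
    have claim : ∀ x ∈ Set.Ioo (q-δ) (q+δ), gG2 γ q x - a2 ≤ L*δ := by
      intro x hx
      have hxI := hJsub hx
      have habsL : ∀ ξ ∈ Set.Ioo l r, |gG3 γ q ξ| ≤ L := by
        intro ξ hξ
        have h5 := gG3_abs_le (q := q) hγ hl0 hq0 hξ.1.le
        have hq2p : 6 * q ≤ 12 * pstar := by
          have := hqI.2; rw [hrdef] at this; linarith
        have hlp3 : 0 < l ^ (-(1/γ)-3) := Real.rpow_pos_of_pos hl0 _
        rw [hLdef]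
        nlinarith
      have hfin : ∀ ξ ∈ Set.Ioo l r, gG3 γ q ξ * (x - q) ≤ L * δ := by
        intro ξ hξ
        calc gG3 γ q ξ * (x - q) ≤ |gG3 γ q ξ * (x - q)| := le_abs_self _
          _ = |gG3 γ q ξ| * |x - q| := abs_mul _ _
          _ ≤ L * δ := by
              apply mul_le_mul (habsL ξ hξ) _ (abs_nonneg _) hL0.le
              rw [abs_le]
              exact ⟨by linarith [hx.1], by linarith [hx.2]⟩
      rcases lt_trichotomy x q with h | h | h
      · have hsub : Set.Icc x q ⊆ Set.Ioo l r := fun y hy =>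
          ⟨lt_of_lt_of_le hxI.1 hy.1, lt_of_le_of_lt hy.2 hqI.2⟩
        obtain ⟨ξ, hξ, hξeq⟩ := exists_hasDerivAt_eq_slope (gG2 γ q) (gG3 γ q) h
          (fun y hy => (gG2_deriv (hxpos y (hsub hy))).continuousAt.continuousWithinAt)
          (fun y hy => gG2_deriv (hxpos y (hsub (Set.Ioo_subset_Icc_self hy))))
        have hξI : ξ ∈ Set.Ioo l r := hsub (Set.Ioo_subset_Icc_self hξ)
        have h6 := hfin ξ hξI
        rw [hξeq] at h6
        have hne : q - x ≠ 0 := by intro hh; linarith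
        rw [div_mul_eq_mul_div, ← ha2] at h6
        calc gG2 γ q x - a2 = (a2 - gG2 γ q x) * (x - q) / (q - x) := by
              field_simp
              ring
          _ ≤ L * δ := h6
      · rw [h, ← ha2, sub_self]
        positivity
      · have hsub : Set.Icc q x ⊆ Set.Ioo l r := fun y hy =>
          ⟨lt_of_lt_of_le hqI.1 hy.1, lt_of_le_of_lt hy.2 hxI.2⟩
        obtain ⟨ξ, hξ, hξeq⟩ := exists_hasDerivAt_eq_slope (gG2 γ q) (gG3 γ q) h
          (fun y hy => (gG2_deriv (hxpos y (hsub hy))).continuousAt.continuousWithinAt)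
          (fun y hy => gG2_deriv (hxpos y (hsub (Set.Ioo_subset_Icc_self hy))))
        have hξI : ξ ∈ Set.Ioo l r := hsub (Set.Ioo_subset_Icc_self hξ)
        have h6 := hfin ξ hξI
        rw [hξeq] at h6
        have hne : x - q ≠ 0 := by intro hh; linarith
        rw [div_mul_eq_mul_div, ← ha2] at h6
        calc gG2 γ q x - a2 = (gG2 γ q x - a2) * (x - q) / (x - q) := by
              field_simp
          _ ≤ L * δ := h6
    -- nonnegativity of the comparison function on J
    have hU : ∀ x ∈ Set.Ioo (q-δ) (q+δ),
        0 ≤ (a2/2 + (L/2+1)*δ)*(x-q)^2 - (gG γ q x - gG γ q q) := by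
      apply nonneg_of_deriv_zero_mono hqJ
        (f' := fun x => (a2 + (L+2)*δ)*(x-q) - gG1 γ q x)
      · intro x hx
        have hid : HasDerivAt (fun y:ℝ => y - q) 1 x := (hasDerivAt_id x).sub_const q
        have h1 := ((hid.pow 2).const_mul (a2/2 + (L/2+1)*δ)).sub
          ((gG_deriv (q := q) hγ (hxpos x (hJsub hx))).sub_const (gG γ q q))
        refine h1.congr_deriv ?_
        push_cast
        ring
      · simp
      · simp [gG1_self hq0]
      · apply monoOn_of_hasDerivAt (f' := fun x => (a2 + (L+2)*δ) - gG2 γ q x)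
        · intro x hx
          have hid : HasDerivAt (fun y:ℝ => y - q) 1 x := (hasDerivAt_id x).sub_const q
          have h1 := (hid.const_mul (a2 + (L+2)*δ)).sub (gG1_deriv (q := q) (γ := γ) (hxpos x (hJsub hx)))
          refine h1.congr_deriv ?_
          ring
        · intro x hx
          have := claim x hx
          have : gG2 γ q x ≤ a2 + L*δ := by linarith
          show 0 ≤ (a2 + (L+2)*δ) - gG2 γ q x
          linarith
    have hup := hU p hpJ
    rw [hexp1, e1, key]
    linarith
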